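/- arXiv:2006.14040 — 3 statements merged into one kernel-verified Lean document; each statement's English description precedes it below -/
import Mathlib

section
/- For v ∈ F_2^{2m} with E(v) ≠ ±I_N, the matrix G_v = (I_N ± iE(v))/√2 is unitary, and for every W in the Heisenberg–Weyl group: G_v W G_v† = W if W commutes with E(v), and G_v W G_v† = ∓ i W E(v) if W anticommutes with E(v). Consequently G_v is a Clifford matrix whose associated symplectic matrix is the symplectic transvection T_v = I_{2m} + Ω v^t v. -/
open Matrix
open scoped Classical

noncomputable section

abbrev V (m : ℕ) := Fin m → ZMod 2

/-- Integer dot product of two binary vectors (using {0,1} representatives). -/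
def dotN {m : ℕ} (a b : V m) : ℕ := ∑ i, (a i).val * (b i).val

/-- The matrix `D(a,b)` with `D(a,b)|v⟩ = (−1)^{b·v}|v⊕a⟩`. -/
def DM {m : ℕ} (a b : V m) : Matrix (V m) (V m) ℂ :=
  Matrix.of fun u v => if u = v + a then (-1 : ℂ) ^ dotN b v else 0

/-- The Hermitian Pauli `E(a,b) = i^{a·b mod 4} D(a,b)`, for `c = (a,b) ∈ F_2^{2m}`. -/
def EM {m : ℕ} (c : V m × V m) : Matrix (V m) (V m) ℂ :=
  Complex.I ^ dotN c.1 c.2 • DM c.1 c.2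

/-- The Heisenberg–Weyl group `HW_N = {i^k D(a,b)}`, as a set of matrices. -/
def HW (m : ℕ) : Set (Matrix (V m) (V m) ℂ) :=
  {M | ∃ (k : Fin 4) (a b : V m), M = Complex.I ^ (k : ℕ) • DM a b}

/-- A Clifford matrix: a unitary normalizing the Heisenberg–Weyl group. -/
def IsClifford {m : ℕ} (G : Matrix (V m) (V m) ℂ) : Prop :=
  G ∈ Matrix.unitaryGroup (V m) ℂ ∧ ∀ W ∈ HW m, G * W * Gᴴ ∈ HW m

/-- The (Pauli/Weyl) support of a matrix, identified with vectors in `F_2^{2m}`. -/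
def supp {m : ℕ} (M : Matrix (V m) (V m) ℂ) : Set (V m × V m) :=
  {c | Matrix.trace ((EM c)ᴴ * M) ≠ 0}

/-- The symplectic inner product on `F_2^{2m}`. -/
def sympl {m : ℕ} (u v : V m × V m) : ZMod 2 :=
  ∑ i, (u.1 i * v.2 i + u.2 i * v.1 i)

/-- The Clifford hierarchy; `CH m k` is the `(k+1)`-st level `C^(k+1)`, so
`CH m 0 = HW_N = C^(1)` and `C^(3) = CH m 2`. -/
def CH (m : ℕ) : ℕ → Set (Matrix (V m) (V m) ℂ)
  | 0 => HW m
  | k + 1 => {U | U ∈ Matrix.unitaryGroup (V m) ℂ ∧ ∀ W ∈ HW m, U * W * Uᴴ ∈ CH m k}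


lemma neg_one_pow_eq_one_of {n : ℕ} (h : (n : ZMod 2) = 0) : (-1:ℂ)^n = 1 := by
  have h2 : 2 ∣ n := by rwa [ZMod.natCast_eq_zero_iff] at h
  exact Even.neg_one_pow (even_iff_two_dvd.mpr h2)

lemma neg_one_pow_eq_neg_one_of {n : ℕ} (h : (n : ZMod 2) = 1) : (-1:ℂ)^n = -1 := by
  have : (n : ZMod 2) = ((1:ℕ) : ZMod 2) := by simpa using h
  have hmod := (ZMod.natCast_eq_natCast_iff n 1 2).mp this
  have : n % 2 = 1 := by simpa [Nat.ModEq] using hmod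
  exact (Nat.odd_iff.mpr this).neg_one_pow

lemma neg_one_pow_congr' {n k : ℕ} (h : (n : ZMod 2) = (k : ZMod 2)) : (-1:ℂ)^n = (-1:ℂ)^k := by
  have hmod := (ZMod.natCast_eq_natCast_iff n k 2).mp h
  have hm : n % 2 = k % 2 := hmod
  rcases Nat.even_or_odd n with he | ho
  · rw [he.neg_one_pow, (Nat.even_iff.mpr (by have := Nat.even_iff.mp he; omega : k % 2 = 0)).neg_one_pow]
  · rw [ho.neg_one_pow, (Nat.odd_iff.mpr (by have := Nat.odd_iff.mp ho; omega)).neg_one_pow]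

lemma cast_dotN {m : ℕ} (a b : V m) : ((dotN a b : ℕ) : ZMod 2) = ∑ i, a i * b i := by
  rw [dotN]
  push_cast
  simp [ZMod.natCast_val, ZMod.cast_id]

lemma dotN_comm {m : ℕ} (a b : V m) : dotN a b = dotN b a := by
  unfold dotN; exact Finset.sum_congr rfl fun i _ => Nat.mul_comm _ _

lemma Vadd_self {m : ℕ} (a : V m) : a + a = 0 := by
  have h2 : ∀ x : ZMod 2, x + x = 0 := by decide
  funext i
  simpa using h2 (a i)

lemma Vadd_cancel {m : ℕ} (x a : V m) : x + a + a = x := by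
  rw [add_assoc, Vadd_self, add_zero]

lemma DM_zero {m : ℕ} : DM (0 : V m) 0 = 1 := by
  ext u w
  simp [DM, dotN, Matrix.one_apply, eq_comm]

lemma DM_mul {m : ℕ} (a b a' b' : V m) :
    DM a b * DM a' b' = ((-1:ℂ) ^ dotN b a') • DM (a + a') (b + b') := by
  ext u w
  simp only [mul_apply, DM, Matrix.of_apply, Matrix.smul_apply, smul_eq_mul]
  rw [Finset.sum_eq_single (w + a')]
  · rw [if_pos rfl]
    by_cases h : u = w + (a + a')
    · rw [if_pos (by rw [h, add_assoc]; ring_nf), if_pos h, ← pow_add, ← pow_add]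
      refine neg_one_pow_congr' ?_
      push_cast
      rw [cast_dotN, cast_dotN, cast_dotN, cast_dotN]
      simp only [Pi.add_apply, add_mul, mul_add, Finset.sum_add_distrib]
      ring
    · rw [if_neg (by intro hc; exact h (by rw [hc, add_assoc]; ring_nf)), if_neg h, zero_mul,
        mul_zero]
  · intro v _ hv
    rw [if_neg hv, mul_zero]
  · intro h; exact absurd (Finset.mem_univ _) h

lemma DM_conjTranspose {m : ℕ} (a b : V m) :
    (DM a b)ᴴ = ((-1:ℂ) ^ dotN a b) • DM a b := by
  ext u w
  simp only [conjTranspose_apply, DM, Matrix.of_apply, Matrix.smul_apply, smul_eq_mul]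
  by_cases h : u = w + a
  · have h' : w = u + a := by rw [h, Vadd_cancel]
    rw [if_pos h', if_pos h]
    have hs : star ((-1:ℂ) ^ dotN b u) = (-1:ℂ) ^ dotN b u := by
      simp [star_pow]
    rw [hs, ← pow_add]
    refine neg_one_pow_congr' ?_
    push_cast
    rw [cast_dotN, cast_dotN, cast_dotN, h]
    simp only [Pi.add_apply, mul_add, Finset.sum_add_distrib]
    have hc : (∑ x, b x * a x) = ∑ i, a i * b i :=
      Finset.sum_congr rfl fun i _ => mul_comm _ _
    rw [hc, add_comm]
  · have h' : w ≠ u + a := fun hc => h (by rw [hc, Vadd_cancel])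
    rw [if_neg h', if_neg h, star_zero, mul_zero]

lemma two_zmod : (2 : ZMod 2) = 0 := by decide

lemma cast_double (y : ℕ) : ((y + y : ℕ) : ZMod 2) = 0 := by
  push_cast; rw [show ((y:ZMod 2) + y = 2 * y) by ring, two_zmod, zero_mul]

lemma npr0 {x y : ℕ} (h : ((x + y : ℕ) : ZMod 2) = 0) : (-1:ℂ)^x = (-1:ℂ)^y := by
  have hyy : (-1:ℂ)^y * (-1)^y = 1 := by
    rw [← pow_add]; exact neg_one_pow_eq_one_of (cast_double y)
  calc (-1:ℂ)^x = (-1)^x * ((-1)^y * (-1)^y) := by rw [hyy, mul_one]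
    _ = ((-1:ℂ)^(x+y)) * (-1)^y := by rw [pow_add]; ring
    _ = (-1:ℂ)^y := by rw [neg_one_pow_eq_one_of h, one_mul]

lemma npr1 {x y : ℕ} (h : ((x + y : ℕ) : ZMod 2) = 1) : (-1:ℂ)^x = -(-1:ℂ)^y := by
  have hyy : (-1:ℂ)^y * (-1)^y = 1 := by
    rw [← pow_add]; exact neg_one_pow_eq_one_of (cast_double y)
  calc (-1:ℂ)^x = (-1)^x * ((-1)^y * (-1)^y) := by rw [hyy, mul_one]
    _ = ((-1:ℂ)^(x+y)) * (-1)^y := by rw [pow_add]; ring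
    _ = -(-1:ℂ)^y := by rw [neg_one_pow_eq_neg_one_of h, neg_one_mul]

lemma I_pow_mod (t : ℕ) : Complex.I ^ t = Complex.I ^ (t % 4) := by
  conv_lhs => rw [← Nat.div_add_mod t 4]
  rw [pow_add, pow_mul, Complex.I_pow_four, one_pow, one_mul]

lemma mem_HW_smul {m : ℕ} (t : ℕ) (a b : V m) : (Complex.I ^ t • DM a b) ∈ HW m := by
  refine ⟨⟨t % 4, Nat.mod_lt _ (by norm_num)⟩, a, b, ?_⟩
  rw [I_pow_mod t]

lemma neg_one_pow_I (n : ℕ) : ((-1:ℂ))^n = Complex.I ^ (2 * n) := by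
  rw [pow_mul, Complex.I_sq]

/-- EM c * EM d in DM normal form. -/
lemma EM_mul_EM {m : ℕ} (c d : V m × V m) :
    EM c * EM d = (Complex.I ^ (dotN c.1 c.2 + dotN d.1 d.2) * (-1:ℂ) ^ dotN c.2 d.1)
      • DM (c.1 + d.1) (c.2 + d.2) := by
  rw [EM, EM, smul_mul_assoc, mul_smul_comm, DM_mul, smul_smul, smul_smul, pow_add]

lemma EM_sq {m : ℕ} (c : V m × V m) : EM c * EM c = 1 := by
  rw [EM_mul_EM, Vadd_self, Vadd_self, DM_zero]
  have h1 : Complex.I ^ (dotN c.1 c.2 + dotN c.1 c.2) = (-1:ℂ) ^ dotN c.1 c.2 := by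
    rw [show dotN c.1 c.2 + dotN c.1 c.2 = 2 * dotN c.1 c.2 by ring, pow_mul, Complex.I_sq]
  have h2 : (-1:ℂ) ^ dotN c.2 c.1 = (-1:ℂ) ^ dotN c.1 c.2 := by rw [dotN_comm]
  rw [h1, h2, ← pow_add, neg_one_pow_eq_one_of (cast_double _), one_smul]

lemma EM_conjTranspose {m : ℕ} (c : V m × V m) : (EM c)ᴴ = EM c := by
  conv_lhs => rw [EM]
  rw [conjTranspose_smul, DM_conjTranspose, smul_smul, EM]
  congr 1
  rw [star_pow, Complex.star_def, Complex.conj_I]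
  rw [show (-Complex.I) ^ dotN c.1 c.2 * (-1:ℂ) ^ dotN c.1 c.2
      = ((-Complex.I) * (-1)) ^ dotN c.1 c.2 by rw [mul_pow], neg_mul_neg, mul_one]

lemma sympl_cast {m : ℕ} (u w : V m × V m) :
    sympl u w = ((dotN u.1 w.2 + dotN u.2 w.1 : ℕ) : ZMod 2) := by
  push_cast
  rw [cast_dotN, cast_dotN, sympl, Finset.sum_add_distrib]

lemma zmod2_cases (x : ZMod 2) : x = 0 ∨ x = 1 := by
  have : ∀ y : ZMod 2, y = 0 ∨ y = 1 := by decide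
  exact this x

/-- product of `I^k • DM a b` with `EM v`, in normal form. -/
lemma smulDM_mul_EM {m : ℕ} (k : ℕ) (a b : V m) (v : V m × V m) :
    (Complex.I ^ k • DM a b) * EM v
      = Complex.I ^ (k + dotN v.1 v.2 + 2 * dotN b v.1) • DM (a + v.1) (b + v.2) := by
  rw [EM, smul_mul_assoc, mul_smul_comm, DM_mul, smul_smul, smul_smul, neg_one_pow_I,
    ← pow_add, ← pow_add]

lemma EM_mul_smulDM {m : ℕ} (k : ℕ) (a b : V m) (v : V m × V m) :
    EM v * (Complex.I ^ k • DM a b)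
      = Complex.I ^ (k + dotN v.1 v.2 + 2 * dotN v.2 a) • DM (a + v.1) (b + v.2) := by
  rw [EM, smul_mul_assoc, mul_smul_comm, DM_mul, smul_smul, smul_smul, neg_one_pow_I,
    ← pow_add, ← pow_add, add_comm v.1 a, add_comm v.2 b]
  congr 2
  ring

lemma comm_of_parity {m : ℕ} (k : ℕ) (a b : V m) (v : V m × V m)
    (h : ((dotN b v.1 + dotN v.2 a : ℕ) : ZMod 2) = 0) :
    (Complex.I ^ k • DM a b) * EM v = EM v * (Complex.I ^ k • DM a b) := by
  rw [smulDM_mul_EM, EM_mul_smulDM]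
  congr 1
  rw [pow_add, pow_add, pow_add, pow_add, pow_mul, pow_mul, Complex.I_sq]
  rw [npr0 h]

lemma anticomm_of_parity {m : ℕ} (k : ℕ) (a b : V m) (v : V m × V m)
    (h : ((dotN b v.1 + dotN v.2 a : ℕ) : ZMod 2) = 1) :
    (Complex.I ^ k • DM a b) * EM v = -(EM v * (Complex.I ^ k • DM a b)) := by
  rw [smulDM_mul_EM, EM_mul_smulDM, ← neg_smul]
  congr 1
  rw [pow_add, pow_add, pow_add, pow_add, pow_mul, pow_mul, Complex.I_sq]
  rw [npr1 h]
  ring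

lemma EM_comm_of {m : ℕ} (c v : V m × V m) (h : sympl v c = 0) :
    EM c * EM v = EM v * EM c := by
  have h' : ((dotN c.2 v.1 + dotN v.2 c.1 : ℕ) : ZMod 2) = 0 := by
    rw [dotN_comm c.2 v.1, ← sympl_cast]; exact h
  have := comm_of_parity (dotN c.1 c.2) c.1 c.2 v h'
  rwa [← EM] at this

lemma EM_anticomm_of {m : ℕ} (c v : V m × V m) (h : sympl v c = 1) :
    EM c * EM v = -(EM v * EM c) := by
  have h' : ((dotN c.2 v.1 + dotN v.2 c.1 : ℕ) : ZMod 2) = 1 := by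
    rw [dotN_comm c.2 v.1, ← sympl_cast]; exact h
  have := anticomm_of_parity (dotN c.1 c.2) c.1 c.2 v h'
  rwa [← EM] at this

lemma EM_mul_eq_smul_EM {m : ℕ} (c v : V m × V m) :
    EM c * EM v = (Complex.I ^ (dotN c.1 c.2 + dotN v.1 v.2 + 2 * dotN c.2 v.1)
      * (-Complex.I) ^ (dotN (c.1 + v.1) (c.2 + v.2))) • EM (c + v) := by
  rw [EM_mul_EM, EM, Prod.fst_add, Prod.snd_add, smul_smul]
  congr 1
  rw [mul_assoc, ← mul_pow, neg_mul, Complex.I_mul_I, neg_neg, one_pow, mul_one,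
    neg_one_pow_I, ← pow_add]

lemma parity_AB {m : ℕ} (c v : V m × V m) :
    ((dotN c.1 c.2 + dotN v.1 v.2 + 2 * dotN c.2 v.1 + dotN (c.1 + v.1) (c.2 + v.2) : ℕ)
      : ZMod 2) = sympl v c := by
  rw [sympl]
  push_cast
  rw [cast_dotN, cast_dotN, cast_dotN, cast_dotN]
  simp only [Pi.add_apply, add_mul, mul_add, Finset.sum_add_distrib]
  have e1 : (∑ i, c.2 i * v.1 i) = ∑ i, v.1 i * c.2 i :=
    Finset.sum_congr rfl fun i _ => mul_comm _ _
  have e2 : (∑ i, c.1 i * v.2 i) = ∑ i, v.2 i * c.1 i :=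
    Finset.sum_congr rfl fun i _ => mul_comm _ _
  have e3 : (∑ i, v.1 i * c.2 i) = ∑ i, v.1 i * c.2 i := rfl
  rw [e1, e2]
  generalize (∑ i, c.1 i * c.2 i : ZMod 2) = x1
  generalize (∑ i, v.1 i * v.2 i : ZMod 2) = x2
  generalize (∑ i, v.1 i * c.2 i : ZMod 2) = x3
  generalize (∑ i, v.2 i * c.1 i : ZMod 2) = x4
  revert x1 x2 x3 x4
  decide

/-- for `v` with `E(v) ≠ ±I`, the matrix `G_v = (I ± iE(v))/√2` is unitary;
it fixes every `W ∈ HW_N` commuting with `E(v)` and maps an anticommuting `W` to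
`∓ i W E(v)`; consequently `G_v` is Clifford with associated symplectic matrix the
transvection `T_v : c ↦ c + ⟨v,c⟩_s v`. -/
theorem stmt2 {m : ℕ} (hm : 1 ≤ m) (v : V m × V m)
    (hv : EM (m := m) v ≠ 1 ∧ EM (m := m) v ≠ -1)
    (ε : ℂ) (hε : ε = 1 ∨ ε = -1) :
    ∀ G : Matrix (V m) (V m) ℂ,
      G = ((Real.sqrt 2 : ℂ))⁻¹ • ((1 : Matrix (V m) (V m) ℂ) + (ε * Complex.I) • EM v) →
      G ∈ Matrix.unitaryGroup (V m) ℂ ∧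
      (∀ W ∈ HW m,
        (W * EM v = EM v * W → G * W * Gᴴ = W) ∧
        (W * EM v = -(EM v * W) → G * W * Gᴴ = (-(ε * Complex.I)) • (W * EM v))) ∧
      IsClifford G ∧
      (∀ c : V m × V m, ∃ s : ℂ, (s = 1 ∨ s = -1) ∧
        G * EM c * Gᴴ = s • EM (c + sympl v c • v)) := by
  intro G hG
  set u : ℂ := ε * Complex.I with hu
  set κ : ℂ := ((Real.sqrt 2 : ℂ))⁻¹ with hκ
  have hE2 : EM v * EM v = 1 := EM_sq v
  have hustar : star u = -u := by
    rcases hε with rfl | rfl <;> simp [hu, Complex.star_def, Complex.conj_I]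
  have hu2 : u * u = -1 := by
    rcases hε with rfl | rfl <;> simp [hu] <;> rw [Complex.I_mul_I]
  have hu1 : u * (-u) = 1 := by rw [mul_neg, hu2, neg_neg]
  have hκstar : star κ = κ := by
    rw [hκ, star_inv₀, Complex.star_def, Complex.conj_ofReal]
  have hsqrt : ((Real.sqrt 2 : ℝ) : ℂ) ≠ 0 :=
    Complex.ofReal_ne_zero.mpr (ne_of_gt (Real.sqrt_pos.mpr (by norm_num)))
  have hκ2 : κ * κ * 2 = 1 := by
    rw [hκ, ← mul_inv]
    rw [← Complex.ofReal_mul, Real.mul_self_sqrt (by norm_num)]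
    norm_num
  have hGH : Gᴴ = κ • ((1 : Matrix (V m) (V m) ℂ) + (-u) • EM v) := by
    rw [hG, conjTranspose_smul, conjTranspose_add, conjTranspose_one, conjTranspose_smul,
      EM_conjTranspose, hκstar, hustar]
  have key : ∀ W : Matrix (V m) (V m) ℂ,
      G * W * Gᴴ = (κ * κ) • (W + (-u) • (W * EM v) + u • (EM v * W)
        + (u * (-u)) • ((EM v * W) * EM v)) := by
    intro W
    rw [hGH, hG]
    simp only [smul_mul_assoc, mul_smul_comm, add_mul, mul_add, one_mul, mul_one, smul_add,
      smul_smul]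
    module
  have commCase : ∀ W : Matrix (V m) (V m) ℂ, W * EM v = EM v * W → G * W * Gᴴ = W := by
    intro W hW
    have h3 : (EM v * W) * EM v = W := by rw [← hW, mul_assoc, hE2, mul_one]
    rw [key, h3, hW, hu1]
    have hlin : W + (-u) • (EM v * W) + u • (EM v * W) + (1:ℂ) • W
        = (2:ℂ) • W := by module
    rw [hlin, smul_smul, hκ2, one_smul]
  have anticommCase : ∀ W : Matrix (V m) (V m) ℂ,
      W * EM v = -(EM v * W) → G * W * Gᴴ = (-u) • (W * EM v) := by
    intro W hW
    have hEW : EM v * W = -(W * EM v) := by rw [hW, neg_neg]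
    have h3 : (EM v * W) * EM v = -W := by rw [hEW, neg_mul, mul_assoc, hE2, mul_one]
    rw [key, h3, hEW, hu1]
    have hlin : W + (-u) • (W * EM v) + u • -(W * EM v) + (1:ℂ) • (-W)
        = (2:ℂ) • ((-u) • (W * EM v)) := by module
    rw [hlin, smul_smul, hκ2, one_smul]
  have hGGH : G * Gᴴ = 1 := by
    have h1 : G * Gᴴ = G * 1 * Gᴴ := by rw [mul_one]
    rw [h1, key 1]
    simp only [Matrix.mul_one, Matrix.one_mul]
    rw [hE2, hu1]
    have hlin : (1 : Matrix (V m) (V m) ℂ) + (-u) • EM v + u • EM v + (1:ℂ) • 1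
        = (2:ℂ) • (1 : Matrix (V m) (V m) ℂ) := by module
    rw [hlin, smul_smul, hκ2, one_smul]
  have hunit : G ∈ Matrix.unitaryGroup (V m) ℂ := by
    rw [Matrix.mem_unitaryGroup_iff, Matrix.star_eq_conjTranspose]
    exact hGGH
  have hHW : ∀ W ∈ HW m, G * W * Gᴴ ∈ HW m := by
    rintro W ⟨k, a, b, rfl⟩
    rcases zmod2_cases ((dotN b v.1 + dotN v.2 a : ℕ) : ZMod 2) with h0 | h1
    · rw [commCase _ (comm_of_parity _ _ _ _ h0)]
      exact ⟨k, a, b, rfl⟩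
    · rw [anticommCase _ (anticomm_of_parity _ _ _ _ h1), smulDM_mul_EM, smul_smul]
      rcases hε with rfl | rfl
      · have : -u * Complex.I ^ ((k:ℕ) + dotN v.1 v.2 + 2 * dotN b v.1)
            = Complex.I ^ ((k:ℕ) + dotN v.1 v.2 + 2 * dotN b v.1 + 3) := by
          conv_rhs => rw [pow_add, show (Complex.I)^3 = -Complex.I by
            rw [pow_succ, Complex.I_sq, neg_one_mul]]
          simp only [hu]
          ring
        rw [this]; exact mem_HW_smul _ _ _
      · have : -u * Complex.I ^ ((k:ℕ) + dotN v.1 v.2 + 2 * dotN b v.1)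
            = Complex.I ^ ((k:ℕ) + dotN v.1 v.2 + 2 * dotN b v.1 + 1) := by
          conv_rhs => rw [pow_add, pow_one]
          simp only [hu]
          ring
        rw [this]; exact mem_HW_smul _ _ _
  refine ⟨hunit, fun W _ => ⟨commCase W, anticommCase W⟩, ⟨hunit, hHW⟩, ?_⟩
  intro c
  rcases zmod2_cases (sympl v c) with hs | hs
  · refine ⟨1, Or.inl rfl, ?_⟩
    rw [hs, zero_smul, add_zero, one_smul]
    exact commCase (EM c) (EM_comm_of c v hs)
  · set A : ℕ := dotN c.1 c.2 + dotN v.1 v.2 + 2 * dotN c.2 v.1 with hA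
    set B : ℕ := dotN (c.1 + v.1) (c.2 + v.2) with hB
    set S : ℂ := Complex.I ^ A * (-Complex.I) ^ B with hS
    have hAB : ((A + B : ℕ) : ZMod 2) = 1 := by
      rw [hA, hB]; rw [parity_AB c v]; exact hs
    have hSS : S * S = -1 := by
      rw [hS]
      have e1 : Complex.I ^ A * (-Complex.I) ^ B * (Complex.I ^ A * (-Complex.I) ^ B)
          = (Complex.I ^ A * Complex.I ^ A) * ((-Complex.I) ^ B * (-Complex.I) ^ B) := by ring
      rw [e1, ← pow_add, ← pow_add]
      have e2 : Complex.I ^ (A + A) = (-1:ℂ) ^ A := by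
        rw [show A + A = 2 * A by ring, pow_mul, Complex.I_sq]
      have e3 : (-Complex.I) ^ (B + B) = (-1:ℂ) ^ B := by
        rw [show B + B = 2 * B by ring, pow_mul, neg_sq, Complex.I_sq]
      rw [e2, e3, ← pow_add, neg_one_pow_eq_neg_one_of hAB]
    have hss : (-u * S) * (-u * S) = 1 := by
      have : (-u * S) * (-u * S) = (u * u) * (S * S) := by ring
      rw [this, hu2, hSS]; norm_num
    refine ⟨-u * S, mul_self_eq_one_iff.mp hss, ?_⟩
    rw [hs, one_smul]
    rw [anticommCase (EM c) (EM_anticomm_of c v hs), EM_mul_eq_smul_EM, smul_smul]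
end
end

section
/- Let S be a symmetric m×m binary matrix and G_U(S) = diag(i^{vSv^t mod 4})_{v ∈ F_2^m} (the quadratic form vSv^t computed over the integers from a binary representative, reduced mod 4). Let W = ker(S) = {w ∈ F_2^m : wS = 0}. If Tr(G_U(S)) ≠ 0 then supp(G_U(S)) = {0} × W^⊥; otherwise there exists c ∈ F_2^m such that supp(G_U(S)) = {0} × (c ⊕ W^⊥). In particular the support of a diagonal Clifford matrix is determined by the row space of its associated symmetric matrix S. -/
open Matrix
open scoped Classical

noncomputable section

/-- The permutation matrix `G_D(P) : |v⟩ ↦ |vP⟩`. -/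
def GD {m : ℕ} (P : Matrix (Fin m) (Fin m) (ZMod 2)) : Matrix (V m) (V m) ℂ :=
  Matrix.of fun u v => if u = Matrix.vecMul v P then 1 else 0

/-- `Fix(P) = {v : vP = v}`. -/
def FixS {m : ℕ} (P : Matrix (Fin m) (Fin m) (ZMod 2)) : Set (V m) :=
  {v | Matrix.vecMul v P = v}

/-- `Res(P) = rowspace(I ⊕ P) = {v ⊕ vP : v ∈ F_2^m}`. -/
def ResS {m : ℕ} (P : Matrix (Fin m) (Fin m) (ZMod 2)) : Set (V m) :=
  {w | ∃ v : V m, w = v + Matrix.vecMul v P}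

/-- Euclidean dual with respect to the standard bilinear form on `F_2^m`. -/
def perp {m : ℕ} (A : Set (V m)) : Set (V m) :=
  {w | ∀ v ∈ A, ∑ i, w i * v i = 0}

/-- The quadratic form `vSv^t` computed over the integers from `{0,1}` representatives. -/
def quadN {m : ℕ} (S : Matrix (Fin m) (Fin m) (ZMod 2)) (v : V m) : ℕ :=
  ∑ i, ∑ j, (v i).val * (S i j).val * (v j).val

/-- The diagonal Clifford `G_U(S) = diag(i^{vSv^t mod 4})`. -/
def GU {m : ℕ} (S : Matrix (Fin m) (Fin m) (ZMod 2)) : Matrix (V m) (V m) ℂ :=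
  Matrix.diagonal fun v => Complex.I ^ quadN S v

namespace Stmt6Aux

def sgn (x : ZMod 2) : ℂ := (-1 : ℂ) ^ x.val

lemma zmod2_cases (x : ZMod 2) : x = 0 ∨ x = 1 := by revert x; decide

lemma sgn_zero : sgn (0 : ZMod 2) = 1 := rfl
lemma sgn_one : sgn (1 : ZMod 2) = -1 := by
  have : (1 : ZMod 2).val = 1 := rfl
  rw [sgn, this, pow_one]

lemma sgn_cases (x : ZMod 2) : sgn x = 1 ∨ sgn x = -1 := by
  rcases zmod2_cases x with h | h <;> subst h <;> simp [sgn_zero, sgn_one]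

lemma sgn_add (x y : ZMod 2) : sgn (x + y) = sgn x * sgn y := by
  rcases zmod2_cases x with h | h <;> rcases zmod2_cases y with h' | h' <;>
    subst h <;> subst h' <;> norm_num [sgn_zero, sgn_one] <;> rfl

lemma sgn_eq_one_iff (x : ZMod 2) : sgn x = 1 ↔ x = 0 := by
  rcases zmod2_cases x with h | h <;> subst h <;> simp [sgn_zero, sgn_one] <;> norm_num

lemma sgn_mul_self (x : ZMod 2) : sgn x * sgn x = 1 := by
  rcases sgn_cases x with h | h <;> rw [h] <;> norm_num

lemma star_sgn (x : ZMod 2) : star (sgn x) = sgn x := by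
  rcases sgn_cases x with h | h <;> rw [h] <;> simp

lemma conj_sgn (x : ZMod 2) : (starRingEnd ℂ) (sgn x) = sgn x := by
  rcases sgn_cases x with h | h <;> rw [h] <;> simp

lemma Ipow_natmod (n : ℕ) : Complex.I ^ n = Complex.I ^ (n % 4) := by
  conv_lhs => rw [← Nat.mod_add_div n 4]
  rw [pow_add, pow_mul, Complex.I_pow_four, one_pow, mul_one]

lemma Ipow_congr {a b : ℕ} (h : (a : ZMod 4) = (b : ZMod 4)) : Complex.I ^ a = Complex.I ^ b := by
  rw [ZMod.natCast_eq_natCast_iff] at h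
  rw [Ipow_natmod a, Ipow_natmod b, h]

lemma neg_one_pow_natCast (n : ℕ) : ((-1 : ℂ)) ^ n = sgn (n : ZMod 2) := by
  rw [sgn, ZMod.val_natCast]
  conv_lhs => rw [← Nat.mod_add_div n 2]
  rw [pow_add, pow_mul, neg_one_sq, one_pow, mul_one]


variable {m : ℕ}

def dz (a b : V m) : ZMod 2 := ∑ i, a i * b i

lemma dz_zero_left (b : V m) : dz 0 b = 0 := by simp [dz]

lemma dz_add_left (a a' b : V m) : dz (a + a') b = dz a b + dz a' b := by
  simp [dz, add_mul, Finset.sum_add_distrib]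

lemma dz_add_right (a b b' : V m) : dz a (b + b') = dz a b + dz a b' := by
  simp [dz, mul_add, Finset.sum_add_distrib]

lemma dotN_cast (a b : V m) : ((dotN a b : ℕ) : ZMod 2) = dz a b := by
  rw [dotN, dz]
  push_cast [ZMod.natCast_val, ZMod.cast_id]
  rfl

lemma neg_one_pow_dotN (a b : V m) : ((-1 : ℂ)) ^ dotN a b = sgn (dz a b) := by
  rw [neg_one_pow_natCast, dotN_cast]

def BN (S : Matrix (Fin m) (Fin m) (ZMod 2)) (u v : V m) : ℕ :=
  ∑ i, ∑ j, (u i).val * (S i j).val * (v j).val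

def bil (S : Matrix (Fin m) (Fin m) (ZMod 2)) (u v : V m) : ZMod 2 :=
  ∑ i, ∑ j, u i * S i j * v j

lemma BN_cast (S : Matrix (Fin m) (Fin m) (ZMod 2)) (u v : V m) :
    ((BN S u v : ℕ) : ZMod 2) = bil S u v := by
  rw [BN, bil]
  push_cast [ZMod.natCast_val, ZMod.cast_id]
  rfl

lemma quadN_eq_BN (S : Matrix (Fin m) (Fin m) (ZMod 2)) (v : V m) :
    quadN S v = BN S v v := rfl

lemma bil_eq_dz (S : Matrix (Fin m) (Fin m) (ZMod 2)) (u v : V m) :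
    bil S u v = dz (Matrix.vecMul u S) v := by
  rw [bil, dz, Finset.sum_comm]
  apply Finset.sum_congr rfl
  intro j _
  rw [Matrix.vecMul, dotProduct, Finset.sum_mul]

lemma bil_symm {S : Matrix (Fin m) (Fin m) (ZMod 2)} (hS : S.IsSymm) (u v : V m) :
    bil S u v = bil S v u := by
  rw [bil, bil, Finset.sum_comm]
  apply Finset.sum_congr rfl
  intro j _
  apply Finset.sum_congr rfl
  intro i _
  rw [← hS.apply i j]
  ring

lemma sum_antisym {F : Fin m → Fin m → ZMod 4}
    (h : ∀ i j, F i j + F j i = 0) (hd : ∀ i, F i i = 0) :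
    ∑ i, ∑ j, F i j = 0 := by
  rw [← Finset.sum_product']
  apply Finset.sum_involution (fun p _ => (p.2, p.1))
  · intro p _; exact h p.1 p.2
  · rintro ⟨i, j⟩ _ hne hcontra
    apply hne
    have h1 : j = i := congrArg Prod.fst hcontra
    subst h1
    exact hd j
  · intro p _; exact Finset.mem_univ _
  · intro p _; rfl

lemma quad_add {S : Matrix (Fin m) (Fin m) (ZMod 2)} (hS : S.IsSymm) (u v : V m) :
    ((quadN S (u + v) : ℕ) : ZMod 4) = ((quadN S u + quadN S v + 2 * BN S u v : ℕ) : ZMod 4) := by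
  have key : ∀ x y : ZMod 2,
      (((x + y).val : ZMod 4)) = (x.val : ZMod 4) + (y.val : ZMod 4)
        - 2 * (x.val : ZMod 4) * (y.val : ZMod 4) := by decide
  have id1 : ∀ a b a' b' s : ZMod 4,
      ((a + b - 2*a*b) * s * (a' + b' - 2*a'*b') - (a*s*a' + b*s*b' + 2*(a*s*b')))
      + ((a' + b' - 2*a'*b') * s * (a + b - 2*a*b) - (a'*s*a + b'*s*b + 2*(a'*s*b))) = 0 := by
    decide
  have id2 : ∀ a b s : ZMod 4,
      ((a + b - 2*a*b) * s * (a + b - 2*a*b) - (a*s*a + b*s*b + 2*(a*s*b))) = 0 := by decide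
  set A : Fin m → ZMod 4 := fun i => ((u i).val : ZMod 4) with hA
  set B : Fin m → ZMod 4 := fun i => ((v i).val : ZMod 4) with hB
  set s : Fin m → Fin m → ZMod 4 := fun i j => ((S i j).val : ZMod 4) with hs
  have hssym : ∀ i j, s j i = s i j := by
    intro i j; rw [hs]; dsimp only; rw [hS.apply i j]
  have lhs_eq : ((quadN S (u + v) : ℕ) : ZMod 4)
      = ∑ i, ∑ j, (A i + B i - 2 * A i * B i) * s i j * (A j + B j - 2 * A j * B j) := by
    rw [quadN]
    simp only [Nat.cast_sum, Nat.cast_mul]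
    apply Finset.sum_congr rfl; intro i _
    apply Finset.sum_congr rfl; intro j _
    rw [Pi.add_apply, Pi.add_apply, key, key]
  have rhs_eq : ((quadN S u + quadN S v + 2 * BN S u v : ℕ) : ZMod 4)
      = ∑ i, ∑ j, (A i * s i j * A j + B i * s i j * B j + 2 * (A i * s i j * B j)) := by
    rw [quadN, quadN, BN]
    simp only [Nat.cast_sum, Nat.cast_mul, Nat.cast_add, Nat.cast_ofNat, Finset.mul_sum,
      Finset.sum_add_distrib]
    rfl
  rw [lhs_eq, rhs_eq, ← sub_eq_zero]
  simp only [← Finset.sum_sub_distrib]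
  apply sum_antisym
  · intro i j
    rw [hssym i j]
    exact id1 (A i) (B i) (A j) (B j) (s i j)
  · intro i
    exact id2 (A i) (B i) (s i i)

def Iq (S : Matrix (Fin m) (Fin m) (ZMod 2)) (v : V m) : ℂ := Complex.I ^ quadN S v

lemma Iq_add {S : Matrix (Fin m) (Fin m) (ZMod 2)} (hS : S.IsSymm) (u v : V m) :
    Iq S (u + v) = Iq S u * Iq S v * sgn (bil S u v) := by
  rw [Iq, Iq, Iq, Ipow_congr (quad_add hS u v), pow_add, pow_add, pow_mul, Complex.I_sq,
    neg_one_pow_natCast, BN_cast]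

lemma Iq_zero (S : Matrix (Fin m) (Fin m) (ZMod 2)) : Iq S 0 = 1 := by
  have : quadN S (0 : V m) = 0 := by simp [quadN]
  rw [Iq, this, pow_zero]

lemma Iq_mul_conj (S : Matrix (Fin m) (Fin m) (ZMod 2)) (v : V m) :
    Iq S v * (starRingEnd ℂ) (Iq S v) = 1 := by
  rw [Iq, Complex.mul_conj]
  norm_num [map_pow, Complex.normSq_I]

lemma card_V : Fintype.card (V m) = 2 ^ m := by simp

lemma ortho (c : V m) : ∑ v : V m, sgn (dz c v) = if c = 0 then ((2 : ℂ) ^ m) else 0 := by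
  split_ifs with h
  · subst h
    simp only [dz_zero_left, sgn_zero]
    rw [Finset.sum_const, Finset.card_univ, card_V]
    simp
  · have hne : ∃ i, c i ≠ 0 := by
      by_contra hc
      push_neg at hc
      exact h (funext hc)
    obtain ⟨i, hi⟩ := hne
    have hci : c i = 1 := by rcases zmod2_cases (c i) with h' | h' <;> tauto
    set e : V m := fun j => if i = j then 1 else 0 with he
    have hdze : dz c e = 1 := by
      rw [dz]
      rw [Finset.sum_eq_single i]
      · rw [he]; simp [hci]
      · intro j _ hj; rw [he]; simp [Ne.symm hj]
      · intro hmem; exact absurd (Finset.mem_univ i) hmem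
    have hself : ∀ x : V m, x + x = 0 := by
      intro x; funext j
      have : ∀ y : ZMod 2, y + y = 0 := by decide
      exact this (x j)
    have hshift : ∑ v : V m, sgn (dz c v) = ∑ v : V m, sgn (dz c (v + e)) :=
      Fintype.sum_equiv (Equiv.addRight e) _ _ (fun x => by
        rw [Equiv.coe_addRight, add_assoc, hself e, add_zero])
    have : ∑ v : V m, sgn (dz c v) = -∑ v : V m, sgn (dz c v) := by
      conv_lhs => rw [hshift]
      rw [← Finset.sum_neg_distrib]
      apply Finset.sum_congr rfl
      intro v _
      rw [dz_add_right, hdze, sgn_add, sgn_one]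
      ring
    have h2 : (2 : ℂ) * ∑ v : V m, sgn (dz c v) = 0 := by linear_combination this
    have := mul_eq_zero.mp h2
    simpa using this


lemma add_self (x : V m) : x + x = 0 := by
  funext j
  have : ∀ y : ZMod 2, y + y = 0 := by decide
  exact this (x j)

def fb (S : Matrix (Fin m) (Fin m) (ZMod 2)) (b : V m) : ℂ :=
  ∑ v, sgn (dz b v) * Iq S v

lemma dotN_zero_left (b : V m) : dotN (0 : V m) b = 0 := by simp [dotN]

lemma trace_GU (S : Matrix (Fin m) (Fin m) (ZMod 2)) : Matrix.trace (GU S) = fb S 0 := by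
  rw [GU, Matrix.trace_diagonal, fb]
  apply Finset.sum_congr rfl
  intro v _
  rw [dz_zero_left, sgn_zero, one_mul, Iq]

lemma trace_EM (S : Matrix (Fin m) (Fin m) (ZMod 2)) (a b : V m) :
    Matrix.trace ((EM (a, b))ᴴ * GU S) = if a = 0 then fb S b else 0 := by
  rw [Matrix.trace]
  simp only [Matrix.diag_apply, Matrix.mul_apply, Matrix.conjTranspose_apply, GU,
    Matrix.diagonal_apply, mul_ite, mul_zero, Finset.sum_ite_eq', Finset.mem_univ, if_true]
  simp only [EM, DM, Matrix.smul_apply, Matrix.of_apply, smul_eq_mul]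
  split_ifs with ha
  · subst ha
    rw [fb]
    apply Finset.sum_congr rfl
    intro u _
    rw [if_pos (by rw [add_zero]), dotN_zero_left, pow_zero, one_mul, neg_one_pow_dotN,
      star_sgn, Iq]
  · apply Finset.sum_eq_zero
    intro u _
    rw [if_neg (by rw [left_eq_add]; exact ha)]
    simp

lemma supp_GU (S : Matrix (Fin m) (Fin m) (ZMod 2)) :
    supp (GU S) = {c : V m × V m | c.1 = 0 ∧ fb S c.2 ≠ 0} := by
  ext ⟨a, b⟩
  simp only [supp, Set.mem_setOf_eq, trace_EM]
  split_ifs with ha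
  · simp [ha]
  · simp [ha]

lemma fb_shift {S : Matrix (Fin m) (Fin m) (ZMod 2)} (hS : S.IsSymm) {w : V m}
    (hw : Matrix.vecMul w S = 0) (b : V m) :
    fb S b = (sgn (dz b w) * Iq S w) * fb S b := by
  calc fb S b = ∑ v : V m, sgn (dz b (v + w)) * Iq S (v + w) :=
        (Fintype.sum_equiv (Equiv.addRight w) _ _ (fun x => rfl)).symm
    _ = ∑ v : V m, (sgn (dz b w) * Iq S w) * (sgn (dz b v) * Iq S v) := by
        apply Finset.sum_congr rfl
        intro v _
        rw [dz_add_right, sgn_add, Iq_add hS, bil_symm hS, bil_eq_dz, hw, dz_zero_left,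
          sgn_zero, mul_one]
        ring
    _ = (sgn (dz b w) * Iq S w) * fb S b := by rw [fb, Finset.mul_sum]

lemma fb_factor_one {S : Matrix (Fin m) (Fin m) (ZMod 2)} (hS : S.IsSymm) {b : V m}
    (hb : fb S b ≠ 0) : ∀ w : V m, Matrix.vecMul w S = 0 → sgn (dz b w) * Iq S w = 1 := by
  intro w hw
  have h1 := fb_shift hS hw b
  have h2 : (sgn (dz b w) * Iq S w) * fb S b = 1 * fb S b := by rw [one_mul, ← h1]
  exact mul_right_cancel₀ hb h2

lemma fb_norm {S : Matrix (Fin m) (Fin m) (ZMod 2)} (hS : S.IsSymm) (b : V m) :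
    fb S b * (starRingEnd ℂ) (fb S b)
      = (2:ℂ)^m * ∑ w : V m, (if Matrix.vecMul w S = 0 then sgn (dz b w) * Iq S w else 0) := by
  have step1 : fb S b * (starRingEnd ℂ) (fb S b)
      = ∑ v : V m, ∑ u : V m,
          (sgn (dz b u) * Iq S u) * ((starRingEnd ℂ) (sgn (dz b v) * Iq S v)) := by
    rw [fb, map_sum, Finset.sum_mul_sum, Finset.sum_comm]
  rw [step1]
  have step2 : ∀ v : V m,
      ∑ u : V m, (sgn (dz b u) * Iq S u) * ((starRingEnd ℂ) (sgn (dz b v) * Iq S v))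
      = ∑ w : V m, (sgn (dz b (v + w)) * Iq S (v + w)) *
          ((starRingEnd ℂ) (sgn (dz b v) * Iq S v)) := by
    intro v
    exact (Fintype.sum_equiv (Equiv.addLeft v) _ _ (fun x => rfl)).symm
  simp_rw [step2]
  rw [Finset.sum_comm, Finset.mul_sum]
  apply Finset.sum_congr rfl
  intro w _
  have inner : ∀ v : V m,
      (sgn (dz b (v + w)) * Iq S (v + w)) * ((starRingEnd ℂ) (sgn (dz b v) * Iq S v))
      = (sgn (dz b w) * Iq S w) * sgn (dz (Matrix.vecMul w S) v) := by
    intro v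
    rw [_root_.map_mul, conj_sgn, dz_add_right, sgn_add, Iq_add hS, bil_symm hS, bil_eq_dz]
    calc (sgn (dz b v) * sgn (dz b w)) *
          (Iq S v * Iq S w * sgn (dz (Matrix.vecMul w S) v)) *
          (sgn (dz b v) * (starRingEnd ℂ) (Iq S v))
        = (sgn (dz b v) * sgn (dz b v)) * (Iq S v * (starRingEnd ℂ) (Iq S v)) *
          ((sgn (dz b w) * Iq S w) * sgn (dz (Matrix.vecMul w S) v)) := by ring
      _ = (sgn (dz b w) * Iq S w) * sgn (dz (Matrix.vecMul w S) v) := by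
          rw [sgn_mul_self, Iq_mul_conj, one_mul, one_mul]
  simp_rw [inner]
  rw [← Finset.mul_sum, ortho]
  split_ifs with h
  · ring
  · ring

lemma fb_ne_zero {S : Matrix (Fin m) (Fin m) (ZMod 2)} (hS : S.IsSymm) {b : V m}
    (h : ∀ w : V m, Matrix.vecMul w S = 0 → sgn (dz b w) * Iq S w = 1) : fb S b ≠ 0 := by
  intro h0
  have hnorm := fb_norm hS b
  rw [h0, zero_mul] at hnorm
  have hsum : ∑ w : V m, (if Matrix.vecMul w S = 0 then sgn (dz b w) * Iq S w else 0)
      = ((Finset.univ.filter (fun w : V m => Matrix.vecMul w S = 0)).card : ℂ) := by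
    rw [← Finset.sum_boole]
    apply Finset.sum_congr rfl
    intro w _
    split_ifs with hw
    · exact h w hw
    · rfl
  rw [hsum] at hnorm
  have h2 : ((2:ℂ)^m) ≠ 0 := pow_ne_zero _ two_ne_zero
  have h3 : ((Finset.univ.filter (fun w : V m => Matrix.vecMul w S = 0)).card : ℂ) ≠ 0 := by
    rw [Nat.cast_ne_zero]
    apply Finset.Nonempty.card_ne_zero
    exact ⟨0, by simp [Matrix.zero_vecMul]⟩
  exact (mul_ne_zero h2 h3) hnorm.symm

lemma Iq_ker_pm {S : Matrix (Fin m) (Fin m) (ZMod 2)} {w : V m}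
    (hw : Matrix.vecMul w S = 0) : Iq S w = 1 ∨ Iq S w = -1 := by
  have h2 : ((quadN S w : ℕ) : ZMod 2) = 0 := by
    rw [quadN_eq_BN, BN_cast, bil_eq_dz, hw, dz_zero_left]
  rw [ZMod.natCast_eq_zero_iff] at h2
  obtain ⟨k, hk⟩ := h2
  rw [Iq, hk, pow_mul, Complex.I_sq]
  rcases Nat.even_or_odd k with he | ho
  · left; exact he.neg_one_pow
  · right; exact ho.neg_one_pow

lemma exists_c {S : Matrix (Fin m) (Fin m) (ZMod 2)} (hS : S.IsSymm) :
    ∃ c : V m, ∀ w : V m, Matrix.vecMul w S = 0 → sgn (dz c w) = Iq S w := by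
  haveI : Fact (Nat.Prime 2) := ⟨by norm_num⟩
  classical
  set p : Submodule (ZMod 2) (V m) := LinearMap.ker (Matrix.vecMulLinear S) with hp
  have hmem : ∀ w : V m, w ∈ p ↔ Matrix.vecMul w S = 0 := by
    intro w
    rw [hp, LinearMap.mem_ker, Matrix.vecMulLinear_apply]
  have hIq_mul : ∀ w w' : V m, Matrix.vecMul w S = 0 →
      Iq S (w + w') = Iq S w * Iq S w' := by
    intro w w' hw
    rw [Iq_add hS, bil_eq_dz, hw, dz_zero_left, sgn_zero, mul_one]
  set τ0 : V m → ZMod 2 := fun w => if Iq S w = 1 then 0 else 1 with hτ0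
  have hsgnτ0 : ∀ w : V m, Matrix.vecMul w S = 0 → sgn (τ0 w) = Iq S w := by
    intro w hw
    rcases Iq_ker_pm hw with h | h
    · rw [hτ0]; dsimp only; rw [if_pos h, sgn_zero, h]
    · rw [hτ0]; dsimp only; rw [if_neg (by rw [h]; norm_num), sgn_one, h]
  have hτadd : ∀ w w' : V m, w ∈ p → w' ∈ p → τ0 (w + w') = τ0 w + τ0 w' := by
    intro w w' hw hw'
    rw [hmem] at hw hw'
    have hmul := hIq_mul w w' hw
    rcases Iq_ker_pm hw with h1 | h1 <;> rcases Iq_ker_pm hw' with h2 | h2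
    · rw [hτ0]; dsimp only
      rw [hmul, h1, h2, if_pos (by norm_num : (1:ℂ)*1 = 1), if_pos rfl]; rfl
    · rw [hτ0]; dsimp only
      rw [hmul, h1, h2, if_neg (by norm_num : ¬(1:ℂ)*(-1) = 1), if_pos rfl,
        if_neg (by norm_num : ¬(-1:ℂ) = 1)]; rfl
    · rw [hτ0]; dsimp only
      rw [hmul, h1, h2, if_neg (by norm_num : ¬(-1:ℂ)*1 = 1),
        if_neg (by norm_num : ¬(-1:ℂ) = 1), if_pos rfl]; rfl
    · rw [hτ0]; dsimp only
      rw [hmul, h1, h2, if_pos (by norm_num : (-1:ℂ)*(-1) = 1),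
        if_neg (by norm_num : ¬(-1:ℂ) = 1)]; rfl
  set τ : p →ₗ[ZMod 2] ZMod 2 :=
    { toFun := fun w => τ0 w.1,
      map_add' := by rintro ⟨w, hw⟩ ⟨w', hw'⟩; exact hτadd w w' hw hw',
      map_smul' := by
        rintro a ⟨w, hw⟩
        rcases zmod2_cases a with h | h <;> subst h
        · simp [hτ0, Iq_zero]
        · simp } with hτ
  obtain ⟨q, hq⟩ := Submodule.exists_isCompl p
  set φ : V m →ₗ[ZMod 2] ZMod 2 := τ ∘ₗ (p.linearProjOfIsCompl q hq) with hφ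
  refine ⟨fun i => φ (fun j => if i = j then 1 else 0), ?_⟩
  intro w hw
  have hwp : w ∈ p := (hmem w).mpr hw
  have hφw : φ w = τ0 w := by
    have hproj : (p.linearProjOfIsCompl q hq) w = ⟨w, hwp⟩ :=
      Submodule.linearProjOfIsCompl_apply_left hq ⟨w, hwp⟩
    rw [hφ, LinearMap.comp_apply, hproj]
    rfl
  have h5 : φ w = ∑ i, w i * φ (fun j => if i = j then 1 else 0) := by
    conv_lhs => rw [pi_eq_sum_univ w]
    rw [map_sum]
    apply Finset.sum_congr rfl
    intro i _
    rw [_root_.map_smul, smul_eq_mul]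
  have hdzc : dz (fun i => φ (fun j => if i = j then 1 else 0)) w = φ w := by
    rw [h5, dz]
    apply Finset.sum_congr rfl
    intro i _
    ring
  rw [hdzc, hφw, hsgnτ0 w hw]

end Stmt6Aux

/-- for symmetric binary `S` with `W = ker(S)`: if `Tr(G_U(S)) ≠ 0` then
`supp(G_U(S)) = {0} × W^⊥`; otherwise `supp(G_U(S)) = {0} × (c ⊕ W^⊥)` for some `c`. -/
theorem stmt6 {m : ℕ} (hm : 1 ≤ m) (S : Matrix (Fin m) (Fin m) (ZMod 2))
    (hS : S.IsSymm) :
    (Matrix.trace (GU S) ≠ 0 →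
      supp (GU S) = ({(0 : V m)} : Set (V m)) ×ˢ perp {w : V m | Matrix.vecMul w S = 0}) ∧
    (Matrix.trace (GU S) = 0 → ∃ c : V m,
      supp (GU S) = ({(0 : V m)} : Set (V m)) ×ˢ
        {b : V m | ∃ w ∈ perp {w' : V m | Matrix.vecMul w' S = 0}, b = c + w}) := by
  classical
  constructor
  · intro htr
    rw [Stmt6Aux.trace_GU] at htr
    have hIq1 : ∀ w : V m, Matrix.vecMul w S = 0 → Stmt6Aux.Iq S w = 1 := by
      intro w hw
      have h := Stmt6Aux.fb_factor_one hS htr w hw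
      rwa [Stmt6Aux.dz_zero_left, Stmt6Aux.sgn_zero, one_mul] at h
    rw [Stmt6Aux.supp_GU]
    ext ⟨a, b⟩
    simp only [Set.mem_setOf_eq, Set.mem_prod, Set.mem_singleton_iff, perp]
    constructor
    · rintro ⟨ha, hfb⟩
      refine ⟨ha, ?_⟩
      intro v hv
      have h := Stmt6Aux.fb_factor_one hS hfb v hv
      rw [hIq1 v hv, mul_one, Stmt6Aux.sgn_eq_one_iff] at h
      exact h
    · rintro ⟨ha, hb⟩
      refine ⟨ha, ?_⟩
      apply Stmt6Aux.fb_ne_zero hS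
      intro w hw
      have hdz : Stmt6Aux.dz b w = 0 := hb w hw
      rw [hdz, Stmt6Aux.sgn_zero, hIq1 w hw, one_mul]
  · intro _
    obtain ⟨c, hc⟩ := Stmt6Aux.exists_c hS
    refine ⟨c, ?_⟩
    rw [Stmt6Aux.supp_GU]
    ext ⟨a, b⟩
    simp only [Set.mem_setOf_eq, Set.mem_prod, Set.mem_singleton_iff, perp]
    constructor
    · rintro ⟨ha, hfb⟩
      refine ⟨ha, b + c, ?_, ?_⟩
      · intro v hv
        have h1 := Stmt6Aux.fb_factor_one hS hfb v hv
        rw [← hc v hv, ← Stmt6Aux.sgn_add, ← Stmt6Aux.dz_add_left,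
          Stmt6Aux.sgn_eq_one_iff] at h1
        exact h1
      · rw [add_comm b c, ← add_assoc, Stmt6Aux.add_self, zero_add]
    · rintro ⟨ha, w, hwperp, hbw⟩
      refine ⟨ha, ?_⟩
      apply Stmt6Aux.fb_ne_zero hS
      intro w' hw'
      have hdzw : Stmt6Aux.dz w w' = 0 := hwperp w' hw'
      subst hbw
      rw [Stmt6Aux.dz_add_left, Stmt6Aux.sgn_add, hdzw, Stmt6Aux.sgn_zero, mul_one,
        hc w' hw']
      rcases Stmt6Aux.Iq_ker_pm hw' with h | h <;> rw [h] <;> norm_num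
end
end

section
/- Let C be a unitary matrix and S a maximal commutative subgroup of the Pauli group. Then C fixes S pointwise (C E C† = E for all E ∈ S) if and only if supp(C) ⊆ S. -/
open Matrix
open scoped Classical

noncomputable section

namespace Aux13

variable {m : ℕ}

lemma vadd_self (v : V m) : v + v = 0 := by
  funext i
  exact CharTwo.add_self_eq_zero (v i)

lemma eq_add_iff (u v a : V m) : u = v + a ↔ v = u + a := by
  constructor <;> rintro rfl <;> rw [add_assoc, vadd_self, add_zero]

def sgn (x : ZMod 2) : ℂ := (-1 : ℂ) ^ x.val

@[simp] lemma sgn_zero : sgn 0 = 1 := rfl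

lemma sgn_add (x y : ZMod 2) : sgn (x + y) = sgn x * sgn y := by
  rcases (by decide : ∀ z : ZMod 2, z = 0 ∨ z = 1) x with rfl | rfl <;> rcases (by decide : ∀ z : ZMod 2, z = 0 ∨ z = 1) y with rfl | rfl <;>
    norm_num [sgn, show ((2:ZMod 2)).val = 0 from rfl, show ((1:ZMod 2)).val = 1 from rfl,
      show ((0:ZMod 2)).val = 0 from rfl]

lemma sgn_eq_one (x : ZMod 2) (h : sgn x = 1) : x = 0 := by
  rcases (by decide : ∀ z : ZMod 2, z = 0 ∨ z = 1) x with rfl | rfl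
  · rfl
  · norm_num [sgn, show ((1:ZMod 2)).val = 1 from rfl] at h

def dot2 (a b : V m) : ZMod 2 := ∑ i, a i * b i

lemma dot2_comm (a b : V m) : dot2 a b = dot2 b a := by
  unfold dot2; congr 1; funext i; exact mul_comm _ _

lemma dot2_add_right (b v w : V m) : dot2 b (v + w) = dot2 b v + dot2 b w := by
  unfold dot2
  rw [← Finset.sum_add_distrib]
  congr 1; funext i
  exact mul_add _ _ _

lemma sgn_sum {ι : Type*} (s : Finset ι) (f : ι → ZMod 2) :
    sgn (∑ i ∈ s, f i) = ∏ i ∈ s, sgn (f i) := by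
  induction s using Finset.cons_induction with
  | empty => simp
  | cons a s ha ih => rw [Finset.sum_cons, Finset.prod_cons, sgn_add, ih]

lemma val_mul2 (x y : ZMod 2) : (x * y).val = x.val * y.val := by
  fin_cases x <;> fin_cases y <;> rfl

lemma neg_one_pow_dotN (a b : V m) : ((-1 : ℂ)) ^ dotN a b = sgn (dot2 a b) := by
  unfold dotN dot2
  rw [sgn_sum]
  rw [← Finset.prod_pow_eq_pow_sum]
  congr 1; funext i
  rw [sgn, val_mul2]

lemma EM_apply (a b : V m) (u v : V m) :
    EM (a, b) u v = if u = v + a then Complex.I ^ dotN a b * sgn (dot2 b v) else 0 := by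
  simp only [EM, DM, Matrix.smul_apply, Matrix.of_apply, neg_one_pow_dotN, smul_eq_mul]
  split <;> simp


lemma sgn_mul_self (x : ZMod 2) : sgn x * sgn x = 1 := by
  rcases (by decide : ∀ z : ZMod 2, z = 0 ∨ z = 1) x with rfl | rfl <;>
    norm_num [sgn, show ((1:ZMod 2)).val = 1 from rfl, show ((0:ZMod 2)).val = 0 from rfl]

lemma eq_add_iff' (x y a : V m) : x = y + a ↔ a = x + y := by
  constructor
  · rintro rfl
    rw [add_comm y a, add_assoc, vadd_self, add_zero]
  · rintro rfl
    rw [add_comm x y, ← add_assoc, vadd_self, zero_add]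

lemma add_eq_zero_iff (u y : V m) : u + y = 0 ↔ u = y := by
  constructor
  · intro h
    have := congrArg (· + y) h
    simpa [add_assoc, vadd_self] using this
  · rintro rfl
    exact vadd_self u

lemma EM_mul_apply (a b a' b' : V m) (x y : V m) :
    (EM (a, b) * EM (a', b')) x y =
      if x = y + (a + a') then
        Complex.I ^ dotN a b * Complex.I ^ dotN a' b' *
          (sgn (dot2 b (y + a')) * sgn (dot2 b' y)) else 0 := by
  rw [Matrix.mul_apply]
  rw [Finset.sum_eq_single (y + a')]
  · rw [EM_apply, EM_apply, if_pos rfl]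
    have hc : x = y + a' + a ↔ x = y + (a + a') := by
      rw [add_assoc, add_comm a' a]
    split_ifs with h1 h2 h2
    · ring
    · exact absurd (hc.mp h1) h2
    · exact absurd (hc.mpr h2) h1
    · ring
  · intro v _ hv
    rw [EM_apply, EM_apply, if_neg hv, mul_zero]
  · intro h
    exact absurd (Finset.mem_univ _) h

lemma sympl_eq (a b a' b' : V m) :
    sympl (a, b) (a', b') = dot2 a b' + dot2 b a' := by
  unfold sympl dot2
  rw [← Finset.sum_add_distrib]

lemma EM_comm (u v : V m × V m) :
    EM u * EM v = sgn (sympl u v) • (EM v * EM u) := by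
  obtain ⟨a, b⟩ := u
  obtain ⟨a', b'⟩ := v
  ext x y
  rw [Matrix.smul_apply, EM_mul_apply, EM_mul_apply, smul_eq_mul, sympl_eq]
  rw [add_comm a' a]
  split_ifs with h
  · rw [dot2_add_right b y a', dot2_add_right b' y a, sgn_add, sgn_add, sgn_add,
      dot2_comm b' a]
    have h1 := sgn_mul_self (dot2 a b')
    linear_combination (-(Complex.I ^ dotN a b * Complex.I ^ dotN a' b' *
      sgn (dot2 b y) * sgn (dot2 b a') * sgn (dot2 b' y))) * h1
  · ring

lemma EM_herm (c : V m × V m) : (EM c)ᴴ = EM c := by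
  obtain ⟨a, b⟩ := c
  ext u v
  rw [Matrix.conjTranspose_apply, EM_apply, EM_apply]
  by_cases h : u = v + a
  · have h' : v = u + a := (eq_add_iff u v a).mp h
    rw [if_pos h', if_pos h]
    subst h
    rw [Complex.star_def, _root_.map_mul]
    have hIc : (starRingEnd ℂ) (Complex.I ^ dotN a b) = (-Complex.I) ^ dotN a b := by
      rw [map_pow, Complex.conj_I]
    have hsc : (starRingEnd ℂ) (sgn (dot2 b (v + a))) = sgn (dot2 b (v + a)) := by
      rw [sgn, map_pow]
      norm_num
    rw [hIc, hsc, dot2_add_right, sgn_add]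
    have hba : sgn (dot2 b a) = (-1 : ℂ) ^ dotN a b := by
      rw [neg_one_pow_dotN, dot2_comm]
    rw [hba]
    have : (-Complex.I) ^ dotN a b * (-1 : ℂ) ^ dotN a b = Complex.I ^ dotN a b := by
      rw [← mul_pow]
      norm_num
    linear_combination sgn (dot2 b v) * this
  · have h' : ¬ v = u + a := fun hh => h ((eq_add_iff v u a).mp hh)
    rw [if_neg h', if_neg h, star_zero]

lemma EM_mul_self (c : V m × V m) : EM c * EM c = 1 := by
  obtain ⟨a, b⟩ := c
  ext x y
  rw [EM_mul_apply, Matrix.one_apply, vadd_self, add_zero]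
  split_ifs with h
  · subst h
    rw [dot2_add_right, sgn_add]
    have h1 := sgn_mul_self (dot2 b x)
    have h2 : Complex.I ^ dotN a b * Complex.I ^ dotN a b * sgn (dot2 b a) = 1 := by
      rw [dot2_comm, ← neg_one_pow_dotN, ← mul_pow, ← mul_pow]
      norm_num
    linear_combination (sgn (dot2 b x) * sgn (dot2 b x)) * h2 + h1
  · rfl

lemma sum_zmod2 (g : ZMod 2 → ℂ) : ∑ x : ZMod 2, g x = g 0 + g 1 := by
  have : (Finset.univ : Finset (ZMod 2)) = {0, 1} := by decide
  rw [this, Finset.sum_pair (by decide : (0 : ZMod 2) ≠ 1)]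

lemma sum_sgn (w : V m) :
    ∑ b : V m, sgn (dot2 b w) = if w = 0 then ((2 ^ m : ℕ) : ℂ) else 0 := by
  have h1 : ∀ b : V m, sgn (dot2 b w) = ∏ i, sgn (b i * w i) := by
    intro b
    rw [dot2, sgn_sum]
  simp_rw [h1]
  rw [← Fintype.prod_sum (fun i (x : ZMod 2) => sgn (x * w i))]
  have h2 : ∀ i, (∑ x : ZMod 2, sgn (x * w i)) = if w i = 0 then (2 : ℂ) else 0 := by
    intro i
    rw [sum_zmod2]
    by_cases h : w i = 0
    · rw [if_pos h, h]
      norm_num [sgn]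
    · have hall : ∀ x : ZMod 2, x ≠ 0 → x = 1 := by decide
      rw [if_neg h, hall _ h]
      norm_num [sgn, show ((1:ZMod 2)).val = 1 from rfl]
  simp_rw [h2]
  by_cases hw : w = 0
  · subst hw
    simp
  · obtain ⟨i, hi⟩ := Function.ne_iff.mp hw
    rw [if_neg hw]
    exact Finset.prod_eq_zero (Finset.mem_univ i) (if_neg hi)

lemma trace_EM_mul (a b : V m) (M : Matrix (V m) (V m) ℂ) :
    Matrix.trace (EM (a, b) * M) =
      ∑ u : V m, Complex.I ^ dotN a b * sgn (dot2 b (u + a)) * M (u + a) u := by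
  rw [Matrix.trace]
  congr 1
  funext x
  rw [Matrix.diag_apply, Matrix.mul_apply]
  simp_rw [EM_apply]
  have hc : ∀ v : V m, (x = v + a) = (v = x + a) := fun v => propext (eq_add_iff x v a)
  simp_rw [hc, ite_mul, zero_mul]
  rw [Finset.sum_ite_eq' Finset.univ (x + a)
    (fun v => Complex.I ^ dotN a b * sgn (dot2 b v) * M v x), if_pos (Finset.mem_univ _)]

lemma expansion (M : Matrix (V m) (V m) ℂ) :
    ∑ c : V m × V m, Matrix.trace (EM c * M) • EM c = ((2 ^ m : ℕ) : ℂ) • M := by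
  ext x y
  simp only [Matrix.sum_apply, Matrix.smul_apply, smul_eq_mul]
  rw [Fintype.sum_prod_type]
  have key : ∀ a b : V m,
      Matrix.trace (EM (a, b) * M) * EM (a, b) x y =
        if a = x + y then (∑ u : V m, sgn (dot2 b (u + y)) * M (u + a) u) else 0 := by
    intro a b
    rw [trace_EM_mul, EM_apply]
    simp only [show (x = y + a) = (a = x + y) from propext (eq_add_iff' x y a)]
    split_ifs with h
    · rw [Finset.sum_mul]
      congr 1
      funext u
      have hstep : sgn (dot2 a b) * sgn (dot2 b (u + a)) * sgn (dot2 b y)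
          = sgn (dot2 b (u + y)) := by
        rw [dot2_add_right b u a, dot2_add_right b u y, sgn_add, sgn_add, dot2_comm a b]
        have h1 := sgn_mul_self (dot2 b a)
        linear_combination sgn (dot2 b u) * sgn (dot2 b y) * h1
      have hII : Complex.I ^ dotN a b * Complex.I ^ dotN a b = sgn (dot2 a b) := by
        rw [← neg_one_pow_dotN, ← mul_pow]
        norm_num
      linear_combination (sgn (dot2 b (u + a)) * sgn (dot2 b y) * M (u + a) u) * hII +
        M (u + a) u * hstep
    · rw [mul_zero]
  simp_rw [key]
  rw [Finset.sum_comm]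
  simp_rw [Finset.sum_ite_eq' Finset.univ, if_pos (Finset.mem_univ _)]
  rw [Finset.sum_comm]
  have h3 : ∀ u : V m,
      (∑ b : V m, sgn (dot2 b (u + y)) * M (u + (x + y)) u)
        = (if u = y then ((2 ^ m : ℕ) : ℂ) else 0) * M (u + (x + y)) u := by
    intro u
    rw [← Finset.sum_mul, sum_sgn]
    simp only [show (u + y = 0) = (u = y) from propext (add_eq_zero_iff u y)]
  simp_rw [h3, ite_mul, zero_mul]
  rw [Finset.sum_ite_eq' Finset.univ y (fun u => ((2 ^ m : ℕ) : ℂ) * M (u + (x + y)) u),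
    if_pos (Finset.mem_univ _)]
  congr 2
  rw [← add_assoc, add_comm y x, add_assoc, vadd_self, add_zero]

lemma sympl_comm (u v : V m × V m) : sympl u v = sympl v u := by
  unfold sympl
  congr 1
  funext i
  ring


end Aux13

open Aux13

/-- for a unitary `C` and a maximal commutative subgroup `S` of the Pauli
group — identified with a maximal isotropic subspace `J ⊆ F₂^{2m}` — `C` fixes `S`
pointwise (`C E(v) C† = E(v)` for all `v ∈ J`) iff `supp(C) ⊆ J`. -/
theorem stmt13 {m : ℕ} (hm : 1 ≤ m) (C : Matrix (V m) (V m) ℂ)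
    (hU : C ∈ Matrix.unitaryGroup (V m) ℂ)
    (J : Submodule (ZMod 2) (V m × V m))
    (hIso : ∀ u ∈ J, ∀ v ∈ J, sympl u v = 0)
    (hMax : ∀ w : V m × V m, (∀ v ∈ J, sympl w v = 0) → w ∈ J) :
    (∀ v ∈ J, C * EM v * Cᴴ = EM v) ↔ supp C ⊆ (J : Set (V m × V m)) := by
  have hCC : C * Cᴴ = 1 := by
    have := (Matrix.mem_unitaryGroup_iff).mp hU
    rwa [Matrix.star_eq_conjTranspose] at this
  have hCC' : Cᴴ * C = 1 := by
    have := (Matrix.mem_unitaryGroup_iff').mp hU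
    rwa [Matrix.star_eq_conjTranspose] at this
  constructor
  · intro h c hc
    have hc' : Matrix.trace (EM c * C) ≠ 0 := by
      rwa [supp, Set.mem_setOf_eq, EM_herm] at hc
    apply hMax
    intro v hv
    have hE := h v hv
    have h1 : C * EM v = EM v * C := by
      calc C * EM v = C * EM v * (Cᴴ * C) := by rw [hCC', mul_one]
        _ = (C * EM v * Cᴴ) * C := by rw [mul_assoc, mul_assoc, mul_assoc]
        _ = EM v * C := by rw [hE]
    have h2 : EM v * (C * EM v) = C := by
      rw [h1, ← mul_assoc, EM_mul_self, one_mul]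
    have h3 : Matrix.trace (EM c * C) = sgn (sympl v c) * Matrix.trace (EM c * C) := by
      conv_lhs => rw [← h2]
      calc Matrix.trace (EM c * (EM v * (C * EM v)))
          = Matrix.trace ((EM c * (EM v * C)) * EM v) := by
            rw [mul_assoc, mul_assoc]
        _ = Matrix.trace (EM v * (EM c * (EM v * C))) := Matrix.trace_mul_comm _ _
        _ = Matrix.trace ((EM v * EM c) * (EM v * C)) := by rw [mul_assoc]
        _ = sgn (sympl v c) * Matrix.trace (EM c * C) := by
            rw [EM_comm v c, smul_mul_assoc, Matrix.trace_smul, smul_eq_mul]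
            congr 1
            rw [mul_assoc, ← mul_assoc (EM v), EM_mul_self, one_mul]
    have h4 : (sgn (sympl v c) - 1) * Matrix.trace (EM c * C) = 0 := by
      rw [sub_mul, one_mul, ← h3, sub_self]
    have h5 : sgn (sympl v c) = 1 := by
      rcases mul_eq_zero.mp h4 with h' | h'
      · exact sub_eq_zero.mp h'
      · exact absurd h' hc'
    have h6 := sgn_eq_one _ h5
    rw [sympl_comm]
    exact h6
  · intro h v hv
    have hN : ((2 ^ m : ℕ) : ℂ) ≠ 0 := by
      exact_mod_cast pow_ne_zero m (two_ne_zero)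
    have hcomm : C * EM v = EM v * C := by
      apply smul_right_injective (Matrix (V m) (V m) ℂ) hN
      have hexp := expansion (m := m) C
      calc ((2 ^ m : ℕ) : ℂ) • (C * EM v)
          = (((2 ^ m : ℕ) : ℂ) • C) * EM v := by rw [smul_mul_assoc]
        _ = (∑ c : V m × V m, Matrix.trace (EM c * C) • EM c) * EM v := by rw [hexp]
        _ = ∑ c : V m × V m, Matrix.trace (EM c * C) • (EM c * EM v) := by
            rw [Finset.sum_mul]
            simp_rw [smul_mul_assoc]
        _ = ∑ c : V m × V m, Matrix.trace (EM c * C) • (EM v * EM c) := by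
            apply Finset.sum_congr rfl
            intro c _
            by_cases hc : Matrix.trace (EM c * C) = 0
            · rw [hc, zero_smul, zero_smul]
            · have hcJ : c ∈ J := by
                apply h
                rw [supp, Set.mem_setOf_eq, EM_herm]
                exact hc
              have hs : sympl c v = 0 := hIso c hcJ v hv
              rw [EM_comm c v, hs, sgn_zero, one_smul]
        _ = (EM v) * (∑ c : V m × V m, Matrix.trace (EM c * C) • EM c) := by
            rw [Finset.mul_sum]
            simp_rw [mul_smul_comm]
        _ = ((2 ^ m : ℕ) : ℂ) • (EM v * C) := by rw [hexp, mul_smul_comm]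
    rw [hcomm, mul_assoc, hCC, mul_one]
end
end
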